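/- Let f : ℝ → ℝ be continuous such that f is injective on [0, ∞), maps [0, ∞) into [0, ∞), and f(0) = 0, and let f(P) be the operator obtained from f by the continuous functional calculus of P. If UCP(P, Q) holds, then UCP(f(P), Q) holds: for every real λ > 0 and every u ∈ H with u ≠ 0 and f(P)u = λ²u, one has Qu ≠ 0. -/

import Mathlib

open Polynomial in
/-- An eigenvector of a self-adjoint bounded operator is an eigenvector of any
continuous function of that operator, with eigenvalue the image of the original one. -/
lemma cfc_apply_eigenvector_aux
    {H : Type*} [NormedAddCommGroup H] [InnerProductSpace ℂ H] [CompleteSpace H]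
    (A : H →L[ℂ] H) (hA : IsSelfAdjoint A) {c : ℝ} (hc : c ∈ spectrum ℝ A)
    {u : H} (hu : A u = (c : ℂ) • u) (g : ℝ → ℝ) (hg : Continuous g) :
    cfc g A u = ((g c : ℝ) : ℂ) • u := by
  -- powers
  have hpow : ∀ n : ℕ, (A ^ n) u = ((c : ℂ) ^ n) • u := by
    intro n
    induction n with
    | zero => simp
    | succ n ih =>
      rw [pow_succ, ContinuousLinearMap.mul_apply, hu, map_smul, ih, smul_smul, pow_succ,
        mul_comm]
  -- polynomials
  have haeval : ∀ q : ℝ[X], (aeval A q) u = ((q.eval c : ℝ) : ℂ) • u := by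
    intro q
    induction q using Polynomial.induction_on' with
    | add p q hp hq =>
      simp only [map_add, ContinuousLinearMap.add_apply, hp, hq, eval_add]
      push_cast
      rw [add_smul]
    | monomial n a =>
      rw [aeval_monomial, ContinuousLinearMap.mul_apply, hpow, Algebra.algebraMap_eq_smul_one,
        ContinuousLinearMap.smul_apply, ContinuousLinearMap.one_apply, eval_monomial,
        ← algebraMap_smul ℂ a ((c : ℂ) ^ n • u), smul_smul, Complex.coe_algebraMap]
      norm_cast
  -- approximation bound
  have key : ∀ ε : ℝ, 0 < ε → ‖cfc g A u - ((g c : ℝ) : ℂ) • u‖ ≤ 2 * ε * ‖u‖ := by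
    intro ε hε
    -- spectrum is compact, hence contained in some interval
    obtain ⟨r, hr⟩ := (spectrum.isCompact (𝕜 := ℝ) A).isBounded.subset_closedBall 0
    have hsub : spectrum ℝ A ⊆ Set.Icc (-r) r := by
      simpa [Real.closedBall_eq_Icc] using hr
    -- Weierstrass approximation
    set I : Set ℝ := Set.Icc (-r) r with hI
    have hGmem : (⟨fun x : I => g x, hg.comp continuous_subtype_val⟩ : C(I, ℝ)) ∈
        (polynomialFunctions I).topologicalClosure := by
      rw [polynomialFunctions_closure_eq_top (-r) r]
      trivial
    rw [← SetLike.mem_coe, Subalgebra.topologicalClosure_coe, Metric.mem_closure_iff] at hGmem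
    obtain ⟨p', hp'mem, hp'⟩ := hGmem ε hε
    rw [SetLike.mem_coe, polynomialFunctions, Subalgebra.mem_map] at hp'mem
    obtain ⟨q, -, hq⟩ := hp'mem
    rw [← hq] at hp'
    have hbound : ∀ x ∈ spectrum ℝ A, |g x - q.eval x| ≤ ε := by
      intro x hx
      have hxI : x ∈ I := hsub hx
      have h := ContinuousMap.dist_apply_le_dist (f := (⟨fun x : I => g x,
        hg.comp continuous_subtype_val⟩ : C(I, ℝ)))
        (g := Polynomial.toContinuousMapOnAlgHom I q) ⟨x, hxI⟩
      simp only [Polynomial.toContinuousMapOnAlgHom_apply, Polynomial.toContinuousMapOn,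
        Polynomial.toContinuousMap, ContinuousMap.coe_mk, Real.dist_eq] at h
      exact le_of_lt (lt_of_le_of_lt h hp')
    -- assemble
    have hcfc_sub : cfc g A - aeval A q = cfc (fun x => g x - q.eval x) A := by
      rw [cfc_sub g (fun x => q.eval x) A (hg.continuousOn)
        ((Polynomial.continuous q).continuousOn), cfc_polynomial q A hA]
    have hnorm : ‖cfc g A - aeval A q‖ ≤ ε := by
      rw [hcfc_sub]
      exact norm_cfc_le hε.le fun x hx => by
        simpa [Real.norm_eq_abs] using hbound x hx
    have h1 : ‖cfc g A u - (aeval A q) u‖ ≤ ε * ‖u‖ := by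
      calc ‖cfc g A u - (aeval A q) u‖ = ‖(cfc g A - aeval A q) u‖ := by
            simp [ContinuousLinearMap.sub_apply]
        _ ≤ ‖cfc g A - aeval A q‖ * ‖u‖ := ContinuousLinearMap.le_opNorm _ u
        _ ≤ ε * ‖u‖ := by gcongr
    have h2 : ‖((q.eval c : ℝ) : ℂ) • u - ((g c : ℝ) : ℂ) • u‖ ≤ ε * ‖u‖ := by
      rw [← sub_smul]
      rw [norm_smul]
      gcongr
      have := hbound c hc
      rw [← Complex.ofReal_sub]
      rw [Complex.norm_real, Real.norm_eq_abs, abs_sub_comm]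
      exact this
    calc ‖cfc g A u - ((g c : ℝ) : ℂ) • u‖
        = ‖(cfc g A u - (aeval A q) u) + (((q.eval c : ℝ) : ℂ) • u - ((g c : ℝ) : ℂ) • u)‖ := by
          rw [haeval q, sub_add_sub_cancel]
      _ ≤ ‖cfc g A u - (aeval A q) u‖ + ‖((q.eval c : ℝ) : ℂ) • u - ((g c : ℝ) : ℂ) • u‖ :=
          norm_add_le _ _
      _ ≤ ε * ‖u‖ + ε * ‖u‖ := add_le_add h1 h2
      _ = 2 * ε * ‖u‖ := by ring
  -- conclude
  rw [← sub_eq_zero, ← norm_eq_zero]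
  by_contra hne
  have hpos : 0 < ‖cfc g A u - ((g c : ℝ) : ℂ) • u‖ := lt_of_le_of_ne (norm_nonneg _) (Ne.symm hne)
  have hupos : 0 < ‖u‖ := by
    rcases eq_or_ne u 0 with h | h
    · subst h; simp at hpos
    · exact norm_pos_iff.mpr h
  set ε := ‖cfc g A u - ((g c : ℝ) : ℂ) • u‖ / (4 * ‖u‖) with hεdef
  have hεpos : 0 < ε := by positivity
  have := key ε hεpos
  rw [hεdef] at this
  have : ‖cfc g A u - ((g c : ℝ) : ℂ) • u‖ ≤ ‖cfc g A u - ((g c : ℝ) : ℂ) • u‖ / 2 := by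
    calc ‖cfc g A u - ((g c : ℝ) : ℂ) • u‖ ≤
        2 * (‖cfc g A u - ((g c : ℝ) : ℂ) • u‖ / (4 * ‖u‖)) * ‖u‖ := this
      _ = ‖cfc g A u - ((g c : ℝ) : ℂ) • u‖ / 2 := by field_simp; ring
  linarith

/-- Lemma 3.6(3) (bounded-operator form): if `f : ℝ → ℝ` is continuous, injective on
`[0, ∞)`, maps `[0, ∞)` into `[0, ∞)` with `f(0) = 0`, and UCP(P, Q) holds, then
UCP(f(P), Q) holds. -/
theorem ucp_functional_calculus
    {H Y : Type*} [NormedAddCommGroup H] [InnerProductSpace ℂ H] [CompleteSpace H]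
    [NormedAddCommGroup Y] [InnerProductSpace ℂ Y] [CompleteSpace Y]
    (P : H →L[ℂ] H) (hP : IsSelfAdjoint P)
    (hPnn : ∀ u : H, 0 ≤ (inner ℂ (P u) u : ℂ).re)
    (Q : H →L[ℂ] Y)
    (f : ℝ → ℝ) (hf : Continuous f)
    (hinj : Set.InjOn f (Set.Ici (0 : ℝ)))
    (hmaps : Set.MapsTo f (Set.Ici (0 : ℝ)) (Set.Ici (0 : ℝ)))
    (hf0 : f 0 = 0)
    (hUCP : ∀ lam : ℝ, 0 < lam → ∀ u : H, u ≠ 0 → P u = ((lam : ℂ) ^ 2) • u → Q u ≠ 0) :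
    ∀ lam : ℝ, 0 < lam → ∀ u : H, u ≠ 0 → cfc f P u = ((lam : ℂ) ^ 2) • u →
      Q u ≠ 0 := by
  intro lam hlam u hu0 hAu
  set A := cfc f P with hAdef
  have hA : IsSelfAdjoint A := cfc_predicate f P
  -- `P` is a positive operator, so its spectrum is nonnegative
  have hPos : P.IsPositive := ContinuousLinearMap.isPositive_def'.mpr ⟨hP, fun x => hPnn x⟩
  have hPspec : spectrum ℝ P ⊆ Set.Ici 0 := fun x hx =>
    SpectrumRestricts.nnreal_iff.mp hPos.spectrumRestricts x hx
  -- `lam ^ 2` is an eigenvalue of `A`, hence in the spectrum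
  have hAu' : A u = ((lam ^ 2 : ℝ) : ℂ) • u := by rw [hAu]; norm_cast
  have hmemC : ((lam : ℂ) ^ 2) ∈ spectrum ℂ A := by
    rw [spectrum.mem_iff]
    intro hunit
    obtain ⟨v, hv⟩ := hunit
    have hker : (algebraMap ℂ (H →L[ℂ] H) ((lam : ℂ) ^ 2) - A) u = 0 := by
      simp only [ContinuousLinearMap.sub_apply, Algebra.algebraMap_eq_smul_one,
        ContinuousLinearMap.smul_apply, ContinuousLinearMap.one_apply, hAu', ← hAdef]
      push_cast
      ring_nf
      simp [sub_self]
    have h1 : ((v⁻¹ : _) * (v : H →L[ℂ] H)) u = u := by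
      rw [v.inv_mul, ContinuousLinearMap.one_apply]
    rw [ContinuousLinearMap.mul_apply, hv, hker, map_zero] at h1
    exact hu0 h1.symm
  have hmemR : lam ^ 2 ∈ spectrum ℝ A := by
    have h := hA.spectrumRestricts.apply_mem hmemC
    simpa [← Complex.ofReal_pow] using h
  -- find `μ ≥ 0` in the spectrum of `P` with `f μ = lam ^ 2`
  have hmemR' := hmemR
  rw [cfc_map_spectrum f P hP hf.continuousOn] at hmemR'
  obtain ⟨μ, hμS, hμ⟩ := hmemR'
  have hμ0 : (0 : ℝ) ≤ μ := hPspec hμS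
  have hμpos : 0 < μ := by
    rcases hμ0.lt_or_eq with h | h
    · exact h
    · exfalso
      rw [← h, hf0] at hμ
      nlinarith
  -- construct a continuous left inverse of `f` on the spectrum of `P`
  set S := spectrum ℝ P with hSdef
  have hScomp : IsCompact S := spectrum.isCompact P
  have hinjS : Set.InjOn f S := hinj.mono hPspec
  have : CompactSpace S := isCompact_iff_compactSpace.mp hScomp
  let m : S → (f '' S) := fun x => ⟨f x, Set.mem_image_of_mem f x.2⟩
  have hmcont : Continuous m := (hf.comp continuous_subtype_val).subtype_mk _
  have hmbij : Function.Bijective m := by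
    constructor
    · intro a b hab
      exact Subtype.ext (hinjS a.2 b.2 (congrArg Subtype.val hab))
    · rintro ⟨y, x, hx, rfl⟩
      exact ⟨⟨x, hx⟩, rfl⟩
  let homeo := Continuous.homeoOfEquivCompactToT2 (f := Equiv.ofBijective m hmbij) hmcont
  let g0 : C(f '' S, ℝ) := ⟨fun y => (homeo.symm y : ℝ),
    continuous_subtype_val.comp homeo.symm.continuous⟩
  have hKclosed : IsClosed (f '' S) := (hScomp.image hf).isClosed
  obtain ⟨gext, hgext⟩ := g0.exists_restrict_eq hKclosed
  have hgf : ∀ x ∈ S, gext (f x) = x := by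
    intro x hx
    have h1 : gext (f x) = g0 ⟨f x, Set.mem_image_of_mem f hx⟩ := by
      have := congrArg (fun F => F ⟨f x, Set.mem_image_of_mem f hx⟩) hgext
      simpa [ContinuousMap.restrict_apply] using this
    rw [h1]
    show ((homeo.symm ⟨f x, _⟩ : S) : ℝ) = x
    have h2 : (⟨f x, Set.mem_image_of_mem f hx⟩ : f '' S) = homeo ⟨x, hx⟩ := rfl
    rw [h2, Homeomorph.symm_apply_apply]
  -- `P = gext(A)` via composition of functional calculi
  have hPeq : P = cfc (⇑gext) A := by
    have h1 : cfc ((⇑gext) ∘ f) P = cfc (⇑gext) A :=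
      cfc_comp' (⇑gext) f P ((map_continuous gext).continuousOn) hf.continuousOn hP
    rw [← h1, cfc_congr (f := ⇑gext ∘ f) (g := fun x : ℝ => x) (fun x hx => hgf x hx),
      cfc_id' ℝ P hP]
  -- hence `u` is an eigenvector of `P` with eigenvalue `μ`
  have hPu : P u = (μ : ℂ) • u := by
    have h := cfc_apply_eigenvector_aux A hA hmemR hAu' (⇑gext) (map_continuous gext)
    rw [← hμ, hgf μ hμS] at h
    rw [hPeq, h]
  -- apply UCP for `P` with `lam = √μ`
  refine hUCP (Real.sqrt μ) (Real.sqrt_pos.mpr hμpos) u hu0 ?_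
  rw [hPu]
  norm_cast
  rw [Real.sq_sqrt hμ0]
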